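/- The trace equivalence relation between two GKAT automata, R_≡ = {(s,u) | ⟦s⟧ = ⟦u⟧}, is an invariant of the dead-state progression: R_≡ progresses to R_≡. -/

import Mathlib

/-- Result of a GKAT automaton transition on an atom. -/
inductive GRes (S A : Type) where
  | reject : GRes S A
  | accept : GRes S A
  | step : S → A → GRes S A

/-- Finite traces: alternating words of atoms and actions ending in an atom. -/
inductive Trace (At A : Type) where
  | atom : At → Trace At A
  | cons : At → A → Trace At A → Trace At A

/-- Finite trace semantics of a state of a GKAT automaton. -/
inductive InTrace {S At A : Type} (ζ : S → At → GRes S A) : S → Trace At A → Prop where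
  | accept {s α} : ζ s α = GRes.accept → InTrace ζ s (Trace.atom α)
  | step {s α s' p w} : ζ s α = GRes.step s' p → InTrace ζ s' w →
      InTrace ζ s (Trace.cons α p w)

/-- A state is dead when its finite trace semantics is empty. -/
def Dead {S At A : Type} (ζ : S → At → GRes S A) (s : S) : Prop :=
  ∀ w, ¬ InTrace ζ s w

/-- Progression with the dead-state predicate between two GKAT automata. -/
def DProgress {S U At A : Type} (ζ₁ : S → At → GRes S A) (ζ₂ : U → At → GRes U A)
    (R R' : S → U → Prop) : Prop :=
  ∀ s u, R s u → ∀ α,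
    ((ζ₁ s α = GRes.accept) ↔ (ζ₂ u α = GRes.accept)) ∧
    (∀ s' p, ζ₁ s α = GRes.step s' p → ζ₂ u α = GRes.reject → Dead ζ₁ s') ∧
    (∀ u' p, ζ₂ u α = GRes.step u' p → ζ₁ s α = GRes.reject → Dead ζ₂ u') ∧
    (∀ s' p u' q, ζ₁ s α = GRes.step s' p → ζ₂ u α = GRes.step u' q → p ≠ q →
      Dead ζ₁ s' ∧ Dead ζ₂ u') ∧
    (∀ s' u' p, ζ₁ s α = GRes.step s' p → ζ₂ u α = GRes.step u' p → R' s' u')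

/-- the trace equivalence relation
`R_≡ = {(s,u) | ⟦s⟧ = ⟦u⟧}` is an invariant of the dead-state progression. -/
theorem trace_equiv_is_invariant {S U At A : Type}
    (ζ₁ : S → At → GRes S A) (ζ₂ : U → At → GRes U A) :
    DProgress ζ₁ ζ₂
      (fun s u => ∀ w, InTrace ζ₁ s w ↔ InTrace ζ₂ u w)
      (fun s u => ∀ w, InTrace ζ₁ s w ↔ InTrace ζ₂ u w) := by
  intro s u hR α
  refine ⟨?_, ?_, ?_, ?_, ?_⟩
  · constructor
    · intro h
      have := (hR (Trace.atom α)).mp (InTrace.accept h)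
      cases this with
      | accept h' => exact h'
    · intro h
      have := (hR (Trace.atom α)).mpr (InTrace.accept h)
      cases this with
      | accept h' => exact h'
  · intro s' p h1 h2 w hw
    have := (hR (Trace.cons α p w)).mp (InTrace.step h1 hw)
    cases this with
    | step h' _ => rw [h2] at h'; cases h'
  · intro u' p h2 h1 w hw
    have := (hR (Trace.cons α p w)).mpr (InTrace.step h2 hw)
    cases this with
    | step h' _ => rw [h1] at h'; cases h'
  · intro s' p u' q h1 h2 hpq
    constructor
    · intro w hw
      have := (hR (Trace.cons α p w)).mp (InTrace.step h1 hw)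
      cases this with
      | step h' _ =>
        rw [h2] at h'
        exact hpq (GRes.step.inj h').2.symm
    · intro w hw
      have := (hR (Trace.cons α q w)).mpr (InTrace.step h2 hw)
      cases this with
      | step h' _ =>
        rw [h1] at h'
        exact hpq (GRes.step.inj h').2
  · intro s' u' p h1 h2 w
    constructor
    · intro hw
      have := (hR (Trace.cons α p w)).mp (InTrace.step h1 hw)
      cases this with
      | step h' hw' =>
        rw [h2] at h'
        obtain ⟨h, -⟩ := GRes.step.inj h'
        exact h ▸ hw'
    · intro hw
      have := (hR (Trace.cons α p w)).mpr (InTrace.step h2 hw)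
      cases this with
      | step h' hw' =>
        rw [h1] at h'
        obtain ⟨h, -⟩ := GRes.step.inj h'
        exact h ▸ hw'
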